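/- Let R be a unital ring and a ∈ R a regular element. Then the Jacobson radical of the ring aRa equals {x ∈ aRa : axa ∈ J(R)}. -/
import Mathlib

lemma isUnit_one_sub_swap {R : Type*} [Ring R] {x y : R} (h : IsUnit (1 - x * y)) :
    IsUnit (1 - y * x) := by
  obtain ⟨u, hu⟩ := h
  set c : R := ↑u⁻¹ with hc
  have h1 : (1 - x * y) * c = 1 := by rw [← hu]; exact u.mul_inv
  have h2 : c * (1 - x * y) = 1 := by rw [← hu]; exact u.inv_mul
  refine isUnit_iff_exists.mpr ⟨1 + y * c * x, ?_, ?_⟩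
  · have key : (1 - y * x) * (1 + y * c * x) = 1 + y * ((1 - x * y) * c - 1) * x := by
      noncomm_ring
    rw [h1] at key; simpa using key
  · have key : (1 + y * c * x) * (1 - y * x) = 1 + y * (c * (1 - x * y) - 1) * x := by
      noncomm_ring
    rw [h2] at key; simpa using key

/-- Noncommutative version of `Ideal.mem_jacobson_bot`. -/
lemma mem_jacobson_bot' {R : Type*} [Ring R] {x : R} :
    x ∈ Ideal.jacobson (⊥ : Ideal R) ↔ ∀ y, IsUnit (x * y + 1) := by
  constructor
  · intro hx y
    obtain ⟨z, hz⟩ := Ideal.mem_jacobson_iff.1 hx y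
    obtain ⟨w, hw⟩ := Ideal.mem_jacobson_iff.1 hx (-(z * y))
    rw [Ideal.mem_bot] at hz hw
    have hz' : z * (1 + y * x) = 1 := by linear_combination (norm := noncomm_ring) hz
    have hw' : w * z = 1 := by linear_combination (norm := noncomm_ring) hw + w * hz
    have hwy : w = 1 + y * x := by
      calc w = w * (z * (1 + y * x)) := by rw [hz', mul_one]
        _ = (w * z) * (1 + y * x) := by rw [mul_assoc]
        _ = 1 + y * x := by rw [hw', one_mul]
    have hyx : IsUnit (1 + y * x) :=
      isUnit_iff_exists.mpr ⟨z, by rw [← hwy]; exact hw', hz'⟩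
    have h1 : IsUnit (1 - (-y) * x) := by
      have e : (1 : R) - (-y) * x = 1 + y * x := by noncomm_ring
      rwa [e]
    have h2 := isUnit_one_sub_swap h1
    have e2 : (1 : R) - x * (-y) = x * y + 1 := by noncomm_ring
    rwa [e2] at h2
  · intro h
    refine Ideal.mem_jacobson_iff.2 fun y => ?_
    have h1 : IsUnit (1 - (-x) * y) := by
      have e : (1 : R) - (-x) * y = x * y + 1 := by noncomm_ring
      rw [e]; exact h y
    have h2 := isUnit_one_sub_swap h1
    obtain ⟨v, hv⟩ := h2
    refine ⟨↑v⁻¹, Ideal.mem_bot.2 ?_⟩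
    have h3 : (↑v⁻¹ : R) * (1 - y * (-x)) = 1 := by rw [← hv]; exact v.inv_mul
    linear_combination (norm := noncomm_ring) h3

/-- If `p` has right inverse `q` and `q` has right inverse `q'`, then `p` is a unit. -/
lemma isUnit_of_right_right {R : Type*} [Ring R] {p q q' : R}
    (h1 : p * q = 1) (h2 : q * q' = 1) : IsUnit p := by
  have hpq : p = q' := by
    calc p = p * (q * q') := by rw [h2, mul_one]
      _ = (p * q) * q' := (mul_assoc p q q').symm
      _ = q' := by rw [h1, one_mul]
  exact isUnit_iff_exists.mpr ⟨q, h1, by rw [hpq]; exact h2⟩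

/-- Key step for the reverse inclusion: if `u` lies in `aRa` and `1 - u` is a unit, then
`u` has a right quasi-inverse inside `aRa`. -/
lemma quasi_inverse_mem {R : Type*} [Ring R] {a u : R} (hA : ∃ t, u = a * t * a)
    (hu : IsUnit (1 - u)) : ∃ y, (∃ t', y = a * t' * a) ∧ u + y - u * y = 0 := by
  obtain ⟨t, ht⟩ := hA
  obtain ⟨v, hv⟩ := hu
  obtain ⟨c, hc⟩ : ∃ c : R, c = ↑v⁻¹ := ⟨_, rfl⟩
  have h1 : (1 - u) * c = 1 := by rw [← hv, hc]; exact v.mul_inv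
  have h2 : c * (1 - u) = 1 := by rw [← hv, hc]; exact v.inv_mul
  obtain ⟨y, hy⟩ : ∃ y : R, y = 1 - c := ⟨_, rfl⟩
  have hcy : c = 1 - y := by rw [hy, sub_sub_cancel]
  rw [hcy] at h1 h2
  have e1 : y = u * y - u := by linear_combination (norm := noncomm_ring) -h1
  have e2 : y = y * u - u := by linear_combination (norm := noncomm_ring) -h2
  have e3 : y = u * (y - 1) * u - u := by
    linear_combination (norm := noncomm_ring) e1 + u * e2
  refine ⟨y, ⟨t * a * (y - 1) * a * t - t, ?_⟩, ?_⟩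
  · calc y = u * (y - 1) * u - u := e3
      _ = a * (t * a * (y - 1) * a * t - t) * a := by rw [ht]; noncomm_ring
  · linear_combination (norm := noncomm_ring) e1

/-- The Jacobson radical of the (possibly non-unital) ring given by a subset `A` of `R`
closed under the operations of `R`: the set of `x ∈ A` such that `x*r` is right
quasi-regular in `A` for every `r ∈ A`. -/
def jacobsonOfSubset {R : Type*} [Ring R] (A : Set R) : Set R :=
  {x ∈ A | ∀ r ∈ A, ∃ y ∈ A, x * r + y - x * r * y = 0}

/-- For a regular element `a` of `R`, the Jacobson radical of the ring `aRa` equals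
`{x ∈ aRa : a*x*a ∈ J(R)}`. -/
theorem jacobson_aRa {R : Type*} [Ring R] (a b : R) (hb : a * b * a = a) :
    jacobsonOfSubset {x : R | ∃ r : R, x = a * r * a} =
      {x : R | (∃ r : R, x = a * r * a) ∧ a * x * a ∈ Ideal.jacobson (⊥ : Ideal R)} := by
  ext x
  simp only [jacobsonOfSubset, Set.mem_setOf_eq, Set.mem_sep_iff]
  constructor
  · rintro ⟨hxA, hx⟩
    refine ⟨hxA, mem_jacobson_bot'.mpr fun s => ?_⟩
    obtain ⟨y, ⟨t, hyt⟩, hy⟩ := hx (a * (-s) * a) ⟨-s, rfl⟩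
    -- hy : x * (a * (-s) * a) + y - x * (a * (-s) * a) * y = 0
    have hxr2 : x * ((a * (-s) * a) * y - a * (-s) * a) = y := by
      linear_combination (norm := noncomm_ring) -hy
    have hr2A : ∃ t', (a * (-s) * a) * y - a * (-s) * a = a * t' * a := by
      refine ⟨(-s) * a * (a * t) - (-s), ?_⟩
      rw [hyt]; noncomm_ring
    obtain ⟨y2, _, hy2⟩ := hx ((a * (-s) * a) * y - a * (-s) * a) hr2A
    rw [hxr2] at hy2
    -- hy2 : y + y2 - y * y2 = 0
    have hright : (1 - y) * (1 - y2) = 1 := by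
      linear_combination (norm := noncomm_ring) -hy2
    have hleft : (1 + x * (a * s * a)) * (1 - y) = 1 := by
      linear_combination (norm := noncomm_ring) -hy
    have hu : IsUnit (1 + x * (a * s * a)) := isUnit_of_right_right hleft hright
    have hu' : IsUnit (1 - (-(x * a * s)) * a) := by
      have e : (1 : R) - (-(x * a * s)) * a = 1 + x * (a * s * a) := by noncomm_ring
      rwa [e]
    have hfin := isUnit_one_sub_swap hu'
    have h3 : (1 : R) - a * -(x * a * s) = a * x * a * s + 1 := by noncomm_ring
    rwa [h3] at hfin
  · rintro ⟨⟨r, hr⟩, hJ⟩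
    refine ⟨⟨r, hr⟩, ?_⟩
    rintro r' ⟨s, hs⟩
    have hA : ∃ t, x * r' = a * t * a := by
      refine ⟨r * a * (a * s), ?_⟩
      rw [hr, hs]; noncomm_ring
    have hunit : IsUnit (1 - x * r') := by
      have h1 : IsUnit (1 - a * (x * a * s)) := by
        have hJ' := mem_jacobson_bot'.mp hJ (-s)
        have e : a * x * a * -s + 1 = 1 - a * (x * a * s) := by noncomm_ring
        rwa [e] at hJ'
      have h2 := isUnit_one_sub_swap h1
      have e2 : (1 : R) - x * a * s * a = 1 - x * r' := by rw [hs]; noncomm_ring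
      rwa [e2] at h2
    obtain ⟨y, hyA, hy⟩ := quasi_inverse_mem hA hunit
    exact ⟨y, hyA, by linear_combination (norm := noncomm_ring) hy⟩
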